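/- Let Δ > δ ≥ 1 be integers and let G be a finite simple graph with minimum degree at least δ and maximum degree at most Δ. Then R(G) = (√(δ·Δ)/(δ+Δ))·|G| holds if and only if G is (δ,Δ)-biregular, where R(G) = ∑_{uv ∈ E(G)} (d(u)·d(v))^{-1/2}. -/
import Mathlib

open Finset

set_option linter.unusedSectionVars false

namespace RandicAux

lemma core (a b s t : ℝ) (ha : 0 < a) (hab : a < b) (hs1 : a ≤ s) (hs2 : s ≤ b)
    (ht1 : a ≤ t) (ht2 : t ≤ b) :
    a * b / (a ^ 2 + b ^ 2) * (1 / s ^ 2 + 1 / t ^ 2) ≤ (s * t)⁻¹ ∧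
    ((s * t)⁻¹ = a * b / (a ^ 2 + b ^ 2) * (1 / s ^ 2 + 1 / t ^ 2) ↔
      (s = a ∧ t = b) ∨ (s = b ∧ t = a)) := by
  have hs : 0 < s := lt_of_lt_of_le ha hs1
  have ht : 0 < t := lt_of_lt_of_le ha ht1
  have hb : 0 < b := ha.trans hab
  have hden : (0:ℝ) < (a ^ 2 + b ^ 2) * s ^ 2 * t ^ 2 := by positivity
  have hid : (s * t)⁻¹ - a * b / (a ^ 2 + b ^ 2) * (1 / s ^ 2 + 1 / t ^ 2) =
      (b * t - a * s) * (b * s - a * t) / ((a ^ 2 + b ^ 2) * s ^ 2 * t ^ 2) := by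
    field_simp
    ring
  have e1 : a * s ≤ a * b := by nlinarith
  have e2 : a * b ≤ b * t := by nlinarith
  have e3 : a * t ≤ a * b := by nlinarith
  have e4 : a * b ≤ b * s := by nlinarith
  have h1 : a * s ≤ b * t := e1.trans e2
  have h2 : a * t ≤ b * s := e3.trans e4
  have hnum : 0 ≤ (b * t - a * s) * (b * s - a * t) := by nlinarith
  constructor
  · have hq := div_nonneg hnum hden.le
    rw [← hid] at hq
    linarith
  · rw [← sub_eq_zero, hid, div_eq_zero_iff]
    constructor
    · rintro (h | h)
      · rcases mul_eq_zero.mp h with h3 | h3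
        · have hsb : a * s = a * b := by linarith
          have htb : b * t = b * a := by linarith [mul_comm a b]
          exact Or.inr ⟨mul_left_cancel₀ ha.ne' hsb, mul_left_cancel₀ hb.ne' htb⟩
        · have hta : a * t = a * b := by linarith
          have hsa : b * s = b * a := by linarith [mul_comm a b]
          exact Or.inl ⟨mul_left_cancel₀ hb.ne' hsa, mul_left_cancel₀ ha.ne' hta⟩
      · exact absurd h hden.ne'
    · rintro (⟨rfl, rfl⟩ | ⟨rfl, rfl⟩) <;> left <;> ring

lemma key (dl dL x y : ℝ) (h0 : 0 < dl) (hlt : dl < dL) (hx1 : dl ≤ x) (hx2 : x ≤ dL)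
    (hy1 : dl ≤ y) (hy2 : y ≤ dL) :
    Real.sqrt (dl * dL) / (dl + dL) * (1 / x + 1 / y) ≤ (x * y) ^ (-(1 / 2) : ℝ) ∧
    ((x * y) ^ (-(1 / 2) : ℝ) = Real.sqrt (dl * dL) / (dl + dL) * (1 / x + 1 / y) ↔
      (x = dl ∧ y = dL) ∨ (x = dL ∧ y = dl)) := by
  have hx : 0 < x := h0.trans_le hx1
  have hy : 0 < y := h0.trans_le hy1
  have hL : 0 < dL := h0.trans hlt
  have EL : Real.sqrt (dl * dL) / (dl + dL) * (1 / x + 1 / y) =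
      Real.sqrt dl * Real.sqrt dL / ((Real.sqrt dl) ^ 2 + (Real.sqrt dL) ^ 2) *
        (1 / (Real.sqrt x) ^ 2 + 1 / (Real.sqrt y) ^ 2) := by
    rw [Real.sqrt_mul h0.le, Real.sq_sqrt h0.le, Real.sq_sqrt hL.le, Real.sq_sqrt hx.le,
      Real.sq_sqrt hy.le]
  have ER : (x * y) ^ (-(1 / 2) : ℝ) = (Real.sqrt x * Real.sqrt y)⁻¹ := by
    rw [Real.rpow_neg (by positivity), ← Real.sqrt_eq_rpow, Real.sqrt_mul hx.le]
  obtain ⟨hineq, hiff⟩ := core (Real.sqrt dl) (Real.sqrt dL) (Real.sqrt x) (Real.sqrt y)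
    (Real.sqrt_pos.mpr h0) (Real.sqrt_lt_sqrt h0.le hlt) (Real.sqrt_le_sqrt hx1)
    (Real.sqrt_le_sqrt hx2) (Real.sqrt_le_sqrt hy1) (Real.sqrt_le_sqrt hy2)
  constructor
  · rw [EL, ER]
    exact hineq
  · rw [EL, ER, hiff, Real.sqrt_inj hx.le h0.le, Real.sqrt_inj hx.le hL.le,
      Real.sqrt_inj hy.le h0.le, Real.sqrt_inj hy.le hL.le]

variable {V : Type*} [Fintype V] [DecidableEq V] (G : SimpleGraph V) [DecidableRel G.Adj]

lemma sum_dart_edge (f : Sym2 V → ℝ) :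
    ∑ d : G.Dart, f d.edge = 2 * ∑ e ∈ G.edgeFinset, f e := by
  have h := Finset.sum_fiberwise_of_maps_to (s := (Finset.univ : Finset G.Dart))
      (t := G.edgeFinset) (g := SimpleGraph.Dart.edge)
      (fun d _ => by rw [SimpleGraph.mem_edgeFinset]; exact d.edge_mem) (fun d => f d.edge)
  rw [← h, Finset.mul_sum]
  refine Finset.sum_congr rfl fun e he => ?_
  have hcard := G.dart_edge_fiber_card e (SimpleGraph.mem_edgeFinset.mp he)
  rw [Finset.sum_congr rfl (fun d hd => by
      rw [Finset.mem_filter] at hd; rw [hd.2] : ∀ d ∈ Finset.univ.filter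
        (fun d : G.Dart => d.edge = e), f d.edge = f e)]
  rw [Finset.sum_const, hcard, nsmul_eq_mul]
  norm_num

lemma sum_dart_nbhd (f : Sym2 V → ℝ) :
    ∑ d : G.Dart, f d.edge = ∑ v, ∑ w ∈ G.neighborFinset v, f s(v, w) := by
  have h := Finset.sum_fiberwise_of_maps_to (s := (Finset.univ : Finset G.Dart))
      (t := (Finset.univ : Finset V)) (g := fun d : G.Dart => d.fst)
      (fun d _ => Finset.mem_univ _) (fun d => f d.edge)
  rw [← h]
  refine Finset.sum_congr rfl fun v _ => ?_
  refine Finset.sum_bij (fun d _ => d.snd) ?_ ?_ ?_ ?_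
  · intro d hd
    rw [Finset.mem_filter] at hd
    obtain ⟨-, rfl⟩ := hd
    rw [SimpleGraph.mem_neighborFinset]
    exact d.adj
  · intro d1 h1 d2 h2 hsnd
    rw [Finset.mem_filter] at h1 h2
    exact SimpleGraph.Dart.ext _ _ (Prod.ext (h1.2.trans h2.2.symm) hsnd)
  · intro w hw
    rw [SimpleGraph.mem_neighborFinset] at hw
    exact ⟨⟨(v, w), hw⟩, Finset.mem_filter.mpr ⟨Finset.mem_univ _, rfl⟩, rfl⟩
  · intro d hd
    rw [Finset.mem_filter] at hd
    obtain ⟨-, rfl⟩ := hd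
    rfl

lemma sum_nbhd_swap (g : V → ℝ) :
    ∑ v, ∑ w ∈ G.neighborFinset v, g w = ∑ w, (G.degree w : ℝ) * g w := by
  simp only [SimpleGraph.neighborFinset_eq_filter, Finset.sum_filter]
  rw [Finset.sum_comm]
  refine Finset.sum_congr rfl fun w _ => ?_
  rw [← Finset.sum_filter, Finset.sum_const, nsmul_eq_mul]
  congr 2
  rw [← SimpleGraph.card_neighborFinset_eq_degree, SimpleGraph.neighborFinset_eq_filter]
  congr 1
  ext v
  simp [SimpleGraph.adj_comm]

end RandicAux

/-- **Theorem (equality case of the O–Shi bound).**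
For integers `Δ > δ ≥ 1` and a graph `G` with degrees in `[δ, Δ]`, the Randić index
satisfies `R(G) = (√(δ·Δ)/(δ+Δ))·|G|` if and only if `G` is `(δ,Δ)`-biregular. -/
theorem randic_index_eq_iff_biregular {V : Type*} [Fintype V] [DecidableEq V]
    (G : SimpleGraph V) [DecidableRel G.Adj]
    (δ Δ : ℕ) (hδ : 1 ≤ δ) (hδΔ : δ < Δ)
    (hmindeg : ∀ v : V, δ ≤ G.degree v) (hmaxdeg : ∀ v : V, G.degree v ≤ Δ) :
    (∑ e ∈ G.edgeFinset,
        Sym2.lift ⟨fun u v => ((G.degree u : ℝ) * (G.degree v : ℝ)) ^ (-(1 / 2) : ℝ),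
          fun u v => by simp [mul_comm]⟩ e =
      Real.sqrt ((δ : ℝ) * Δ) / ((δ : ℝ) + Δ) * Fintype.card V) ↔
    ((∀ v : V, G.degree v = δ ∨ G.degree v = Δ) ∧
      (∀ u v : V, G.Adj u v →
        (G.degree u = δ ∧ G.degree v = Δ) ∨ (G.degree u = Δ ∧ G.degree v = δ))) := by
  classical
  set F : Sym2 V → ℝ := Sym2.lift ⟨fun u v => ((G.degree u : ℝ) * (G.degree v : ℝ)) ^
      (-(1 / 2) : ℝ), fun u v => by simp [mul_comm]⟩ with hF
  set g : Sym2 V → ℝ := Sym2.lift ⟨fun u v => 1 / (G.degree u : ℝ) + 1 / (G.degree v : ℝ),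
      fun u v => by simp [add_comm]⟩ with hg
  have hδ0 : (0:ℝ) < (δ:ℕ) := by exact_mod_cast hδ
  have hδΔ' : ((δ:ℕ):ℝ) < ((Δ:ℕ):ℝ) := by exact_mod_cast hδΔ
  have hd1 : ∀ v : V, ((δ:ℕ):ℝ) ≤ (G.degree v : ℝ) := fun v => by exact_mod_cast hmindeg v
  have hd2 : ∀ v : V, (G.degree v : ℝ) ≤ ((Δ:ℕ):ℝ) := fun v => by exact_mod_cast hmaxdeg v
  have hdpos : ∀ v : V, (0:ℝ) < (G.degree v : ℝ) := fun v => lt_of_lt_of_le hδ0 (hd1 v)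
  -- per-edge inequality
  have hedge_le : ∀ e : Sym2 V,
      Real.sqrt ((δ : ℝ) * Δ) / ((δ : ℝ) + Δ) * g e ≤ F e := by
    intro e
    induction e using Sym2.ind with
    | _ u v =>
      have h := (RandicAux.key ((δ:ℕ):ℝ) ((Δ:ℕ):ℝ) (G.degree u) (G.degree v) hδ0 hδΔ'
        (hd1 u) (hd2 u) (hd1 v) (hd2 v)).1
      simpa [hF, hg] using h
  -- per-edge equality characterization
  have hedge_iff : ∀ u v : V,
      (F s(u, v) = Real.sqrt ((δ : ℝ) * Δ) / ((δ : ℝ) + Δ) * g s(u, v)) ↔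
      ((G.degree u = δ ∧ G.degree v = Δ) ∨ (G.degree u = Δ ∧ G.degree v = δ)) := by
    intro u v
    have h := (RandicAux.key ((δ:ℕ):ℝ) ((Δ:ℕ):ℝ) (G.degree u) (G.degree v) hδ0 hδΔ'
      (hd1 u) (hd2 u) (hd1 v) (hd2 v)).2
    have e1 : F s(u, v) = ((G.degree u : ℝ) * (G.degree v : ℝ)) ^ (-(1 / 2) : ℝ) := by
      simp [hF]
    have e2 : g s(u, v) = 1 / (G.degree u : ℝ) + 1 / (G.degree v : ℝ) := by
      simp [hg]
    rw [e1, e2, h]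
    norm_cast
  -- sum of g over edges equals the number of vertices
  have hgsum : ∑ e ∈ G.edgeFinset, g e = (Fintype.card V : ℝ) := by
    have h2 : ∑ d : G.Dart, g d.edge = 2 * ∑ e ∈ G.edgeFinset, g e :=
      RandicAux.sum_dart_edge G g
    rw [RandicAux.sum_dart_nbhd] at h2
    have hmain : ∑ v, ∑ w ∈ G.neighborFinset v, g s(v, w) = 2 * (Fintype.card V : ℝ) := by
      have hstep : ∀ v : V, ∑ w ∈ G.neighborFinset v, g s(v, w) =
          1 + ∑ w ∈ G.neighborFinset v, 1 / (G.degree w : ℝ) := by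
        intro v
        have : ∀ w ∈ G.neighborFinset v,
            g s(v, w) = 1 / (G.degree v : ℝ) + 1 / (G.degree w : ℝ) := fun w _ => by
          simp [hg]
        rw [Finset.sum_congr rfl this, Finset.sum_add_distrib, Finset.sum_const,
          SimpleGraph.card_neighborFinset_eq_degree, nsmul_eq_mul,
          mul_one_div, div_self (hdpos v).ne']
      rw [Finset.sum_congr rfl (fun v _ => hstep v), Finset.sum_add_distrib,
        Finset.sum_const, RandicAux.sum_nbhd_swap]
      have : ∀ w : V, (G.degree w : ℝ) * (1 / (G.degree w : ℝ)) = 1 := fun w => by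
        rw [mul_one_div, div_self (hdpos w).ne']
      rw [Finset.sum_congr rfl (fun w _ => this w), Finset.sum_const]
      simp [Finset.card_univ]
      ring
    rw [hmain] at h2
    linarith
  have hsplit : ∑ e ∈ G.edgeFinset, F e -
      Real.sqrt ((δ : ℝ) * Δ) / ((δ : ℝ) + Δ) * (Fintype.card V : ℝ) =
      ∑ e ∈ G.edgeFinset, (F e - Real.sqrt ((δ : ℝ) * Δ) / ((δ : ℝ) + Δ) * g e) := by
    rw [Finset.sum_sub_distrib, ← Finset.mul_sum, hgsum]
  constructor
  · intro hEq
    have hzero : ∑ e ∈ G.edgeFinset,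
        (F e - Real.sqrt ((δ : ℝ) * Δ) / ((δ : ℝ) + Δ) * g e) = 0 := by
      rw [← hsplit, hEq]
      ring
    have hall := (Finset.sum_eq_zero_iff_of_nonneg
      (fun e _ => sub_nonneg.mpr (hedge_le e))).mp hzero
    have hadj : ∀ u v : V, G.Adj u v →
        (G.degree u = δ ∧ G.degree v = Δ) ∨ (G.degree u = Δ ∧ G.degree v = δ) := by
      intro u v huv
      have hmem : s(u, v) ∈ G.edgeFinset := SimpleGraph.mem_edgeFinset.mpr huv
      exact (hedge_iff u v).mp (sub_eq_zero.mp (hall _ hmem))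
    refine ⟨fun v => ?_, hadj⟩
    obtain ⟨w, hw⟩ := (G.degree_pos_iff_exists_adj v).mp (lt_of_lt_of_le hδ (hmindeg v))
    rcases hadj v w hw with ⟨h, -⟩ | ⟨h, -⟩
    · exact Or.inl h
    · exact Or.inr h
  · rintro ⟨-, hadj⟩
    have hall : ∀ e ∈ G.edgeFinset,
        F e - Real.sqrt ((δ : ℝ) * Δ) / ((δ : ℝ) + Δ) * g e = 0 := by
      intro e he
      induction e using Sym2.ind with
      | _ u v =>
        rw [SimpleGraph.mem_edgeFinset, SimpleGraph.mem_edgeSet] at he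
        exact sub_eq_zero.mpr ((hedge_iff u v).mpr (hadj u v he))
    have hzero := Finset.sum_eq_zero hall
    rw [← hsplit] at hzero
    linarith
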